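/- Suppose a group G acts on a tree T by automorphisms, without inversions and without fixing any vertex, and suppose the action is transitive on the (unoriented) edges of T. Let e be an edge of T, let E denote the vertex set of one of the two components of T − e, and let Y = {k ∈ G : both endpoints of the edge ke lie in E}, with Y* = G − Y. Then for every g ∈ G: gY = Y if and only if gE = E, and gY* = Y* if and only if gE* = E*. -/

import Mathlib

/-!
Statement 10: in the edge-transitive tree setting, `gY = Y` iff `gE = E`, and `gY* = Y*` iff `gE* = E*`.
-/

open scoped Pointwise

/-- Translating a once-edge-deleted graph by a group element acting by automorphisms
preserves reachability.  -/
lemma smul_deleteEdges_reachable {V G : Type*} [Group G] [MulAction G V]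
    (T : SimpleGraph V)
    (hact : ∀ (g : G) (x y : V), T.Adj x y ↔ T.Adj (g • x) (g • y))
    (g : G) (p q : V) {a b : V}
    (h : (T.deleteEdges {s(p, q)}).Reachable a b) :
    (T.deleteEdges {s(g • p, g • q)}).Reachable (g • a) (g • b) := by
  refine h.map ⟨fun x => g • x, ?_⟩
  intro x y hxy
  rw [SimpleGraph.deleteEdges_adj] at hxy ⊢
  refine ⟨(hact g x y).mp hxy.1, ?_⟩
  intro hc
  apply hxy.2
  simp only [Set.mem_singleton_iff, Sym2.eq_iff] at hc ⊢
  rcases hc with ⟨h1, h2⟩ | ⟨h1, h2⟩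
  · exact Or.inl ⟨MulAction.injective g h1, MulAction.injective g h2⟩
  · exact Or.inr ⟨MulAction.injective g h1, MulAction.injective g h2⟩

theorem translate_eq_iff
    {V G : Type*} [Group G] [MulAction G V] (T : SimpleGraph V) (hT : T.IsTree)
    -- `G` acts on the tree `T` by automorphisms:
    (hact : ∀ (g : G) (x y : V), T.Adj x y ↔ T.Adj (g • x) (g • y))
    -- the action is without inversions:
    (hni : ∀ (g : G) (x y : V), T.Adj x y → ¬(g • x = y ∧ g • y = x))
    -- no vertex is fixed by every element of `G`:
    (hnofix : ¬ ∃ x : V, ∀ g : G, g • x = x)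
    -- `e` is the edge of `T` with endpoints `u` and `v`:
    (u v : V) (huv : T.Adj u v)
    -- the action is transitive on the (unoriented) edges of `T`:
    (htrans : ∀ x y : V, T.Adj x y → ∃ g : G, s(g • u, g • v) = s(x, y))
    -- `E` is the vertex set of the component of `T − e` containing `v`:
    (E : Set V) (hE : E = {x : V | (T.deleteEdges {s(u, v)}).Reachable v x})
    -- `Y = {k ∈ G : both endpoints of ke lie in E}`, and `Y* = G − Y = Yᶜ`:
    (Y : Set G) (hY : Y = {k : G | k • u ∈ E ∧ k • v ∈ E})
    (g : G) :
    (g • Y = Y ↔ g • E = E) ∧ (g • Yᶜ = Yᶜ ↔ g • Eᶜ = Eᶜ) := by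
  have hvE : v ∈ E := by rw [hE]; exact SimpleGraph.Reachable.refl v
  have huE : u ∉ E := by
    have hb : T.IsBridge s(u, v) :=
      (SimpleGraph.isAcyclic_iff_forall_adj_isBridge.mp hT.2) huv
    rw [SimpleGraph.isBridge_iff] at hb
    rw [hE]
    intro h
    exact hb h.symm
  -- crossing the frontier of `E` along an edge forces the edge to be `e = (v, u)`
  have cross : ∀ ⦃x y : V⦄, x ∈ E → T.Adj x y → y ∉ E → x = v ∧ y = u := by
    intro x y hx hxy hy
    by_cases hc : s(x, y) = s(u, v)
    · rcases Sym2.eq_iff.mp hc with ⟨h1, h2⟩ | ⟨h1, h2⟩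
      · exact absurd (h1 ▸ hx) huE
      · exact ⟨h1, h2⟩
    · exfalso
      apply hy
      rw [hE] at hx ⊢
      exact hx.trans ⟨SimpleGraph.Walk.cons
        (by rw [SimpleGraph.deleteEdges_adj]; exact ⟨hxy, by simpa using hc⟩)
        SimpleGraph.Walk.nil⟩
  -- if a walk (in T minus some edge other than e) enters E from outside,
  -- it passes through v
  have enter : ∀ (S : Set (Sym2 V)) {a b : V}, (p : (T.deleteEdges S).Walk a b) →
      a ∉ E → b ∈ E → (T.deleteEdges S).Reachable a v := by
    intro S a b p
    induction p with
    | nil => intro ha hb; exact absurd hb ha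
    | @cons a c b h p ih =>
      intro ha hb
      by_cases hc : c ∈ E
      · have h' : T.Adj c a := ((SimpleGraph.deleteEdges_adj).mp h).1.symm
        have := cross hc h' ha
        exact this.1 ▸ h.reachable
      · exact h.reachable.trans (ih hc hb)
  -- Y is nonempty
  have Ynonempty : ∃ k : G, k ∈ Y := by
    by_cases hleaf : ∃ w, w ≠ u ∧ T.Adj v w
    · obtain ⟨w, hwu, hvw⟩ := hleaf
      have hwE : w ∈ E := by
        by_contra hw
        exact hwu (cross hvE hvw hw).2
      obtain ⟨k, hk⟩ := htrans v w hvw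
      rcases Sym2.eq_iff.mp hk with ⟨h1, h2⟩ | ⟨h1, h2⟩
      · exact ⟨k, by rw [hY]; exact ⟨by rw [h1]; exact hvE, by rw [h2]; exact hwE⟩⟩
      · exact ⟨k, by rw [hY]; exact ⟨by rw [h1]; exact hwE, by rw [h2]; exact hvE⟩⟩
    · exfalso
      push_neg at hleaf
      have hvleaf : ∀ w, T.Adj v w → w = u := by
        intro w hw
        by_contra hwu
        exact (hleaf w hwu) hw
      apply hnofix
      by_cases hbig : ∃ w z, T.Adj u w ∧ w ≠ v ∧ T.Adj w z ∧ z ≠ u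
      · exfalso
        obtain ⟨w, z, huw, hwv, hwz, hzu⟩ := hbig
        -- the image of the leaf `v` under k is a leaf with sole neighbor `k • u`
        have leafg : ∀ (k : G) (x : V), T.Adj (k • v) x → x = k • u := by
          intro k x hx
          have : T.Adj v (k⁻¹ • x) := by
            rw [hact k⁻¹ (k • v) x, inv_smul_smul] at hx; exact hx
          have := hvleaf _ this
          rw [← this, smul_inv_smul]
        obtain ⟨k, hk⟩ := htrans u w huw
        rcases Sym2.eq_iff.mp hk with ⟨h1, h2⟩ | ⟨h1, h2⟩
        · -- k•u = u, k•v = w ; but w has neighbor z ≠ u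
          have := leafg k z (h2.symm ▸ hwz)
          rw [h1] at this
          exact hzu this
        · -- k•u = w, k•v = u ; but u has neighbor v ≠ w
          have := leafg k v (h2.symm ▸ huv)
          rw [h1] at this
          exact hwv this.symm
      · push_neg at hbig
        -- every neighbor of u is a leaf whose only neighbor is u
        have nbleaf : ∀ w, T.Adj u w → ∀ z, T.Adj w z → z = u := by
          intro w hw z hz
          by_cases hwv : w = v
          · exact hvleaf z (hwv ▸ hz)
          · by_contra hzu
            exact hzu (hbig w z hw hwv hz)
        by_cases htwo : ∃ w, T.Adj u w ∧ w ≠ v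
        · obtain ⟨w, huw, hwv⟩ := htwo
          refine ⟨u, fun k => ?_⟩
          by_contra hku
          have hreach : T.Reachable u (k • u) := hT.1.preconnected u (k • u)
          have hmem : ∀ (x y : V) (_ : T.Walk x y),
              (x = u ∨ T.Adj u x) → (y = u ∨ T.Adj u y) := by
            intro x y p
            induction p with
            | nil => exact id
            | @cons a c b h p ih =>
              intro ha
              apply ih
              rcases ha with rfl | ha
              · exact Or.inr h
              · exact Or.inl (nbleaf a ha c h)
          obtain ⟨p⟩ := hreach
          rcases hmem u (k • u) p (Or.inl rfl) with h | h
          · exact hku h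
          · -- k•u is a leaf neighbor of u, yet it has two distinct neighbors
            have h1 : T.Adj (k • u) (k • v) := (hact k u v).mp huv
            have h2 : T.Adj (k • u) (k • w) := (hact k u w).mp huw
            have e1 : k • v = u := nbleaf (k • u) h (k • v) h1
            have e2 : k • w = u := nbleaf (k • u) h (k • w) h2
            exact hwv.symm (MulAction.injective k (e2.trans e1.symm)).symm
        · push_neg at htwo
          have huleaf : ∀ w, T.Adj u w → w = v := fun w hw => htwo w hw
          -- the tree is the single edge {u, v}
          have hmem : ∀ (x y : V) (_ : T.Walk x y),
              (x = u ∨ x = v) → (y = u ∨ y = v) := by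
            intro x y p
            induction p with
            | nil => exact id
            | @cons a c b h p ih =>
              intro ha
              apply ih
              rcases ha with rfl | rfl
              · exact Or.inr (huleaf c h)
              · exact Or.inl (hvleaf c h)
          refine ⟨u, fun k => ?_⟩
          obtain ⟨p⟩ := hT.1.preconnected u (k • u)
          obtain ⟨q⟩ := hT.1.preconnected u (k • v)
          have h1 : T.Adj (k • u) (k • v) := (hact k u v).mp huv
          rcases hmem u (k • u) p (Or.inl rfl) with h | h
          · exact h
          · rcases hmem u (k • v) q (Or.inl rfl) with h2 | h2
            · exact absurd ⟨h, h2⟩ (hni k u v huv)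
            · exact absurd (h.trans h2.symm) h1.ne
  -- the main equivalence
  have main : g • Y = Y ↔ g • E = E := by
    constructor
    · intro hYY
      have h1Y : (1 : G) ∉ Y := by
        rw [hY]
        simp only [Set.mem_setOf_eq, one_smul]
        exact fun h => huE h.1
      have hgY : g ∉ Y := by
        intro h
        rw [← hYY] at h
        rw [Set.mem_smul_set_iff_inv_smul_mem, smul_eq_mul, inv_mul_cancel] at h
        exact h1Y h
      have hgiY : g⁻¹ ∉ Y := by
        intro h
        have : g • g⁻¹ ∈ g • Y := Set.smul_mem_smul_set h
        rw [hYY, smul_eq_mul, mul_inv_cancel] at this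
        exact h1Y this
      rw [hY] at hgY hgiY
      simp only [Set.mem_setOf_eq, not_and_or] at hgY hgiY
      by_cases hc : s(g • u, g • v) = s(u, v)
      · rcases Sym2.eq_iff.mp hc with ⟨h1, h2⟩ | ⟨h1, h2⟩
        · -- g fixes u and v pointwise
          ext x
          rw [Set.mem_smul_set_iff_inv_smul_mem, hE, Set.mem_setOf_eq, Set.mem_setOf_eq]
          constructor
          · intro h
            have := smul_deleteEdges_reachable T hact g u v h
            rw [h1, h2, smul_inv_smul] at this
            exact this
          · intro h
            have := smul_deleteEdges_reachable T hact g⁻¹ u v h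
            rw [show g⁻¹ • u = u from inv_smul_eq_iff.mpr h1.symm,
              show g⁻¹ • v = v from inv_smul_eq_iff.mpr h2.symm] at this
            exact this
        · exact absurd ⟨h1, h2⟩ (hni g u v huv)
      · -- impossible case: derive False
        exfalso
        -- g•u and g•v both lie outside E
        have hsame : ∀ (a b : V), T.Adj a b → s(a, b) ≠ s(u, v) → (a ∈ E ↔ b ∈ E) := by
          intro a b hab hne
          have hadj : (T.deleteEdges {s(u, v)}).Adj a b := by
            rw [SimpleGraph.deleteEdges_adj]
            exact ⟨hab, by simpa using hne⟩
          rw [hE, Set.mem_setOf_eq, Set.mem_setOf_eq]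
          exact ⟨fun h => h.trans hadj.reachable, fun h => h.trans hadj.symm.reachable⟩
        have hguv : T.Adj (g • u) (g • v) := (hact g u v).mp huv
        have hgu : g • u ∉ E ∧ g • v ∉ E := by
          have := hsame _ _ hguv hc
          rcases hgY with h | h
          · exact ⟨h, fun h' => h (this.mpr h')⟩
          · exact ⟨fun h' => h (this.mp h'), h⟩
        have hci : s(g⁻¹ • u, g⁻¹ • v) ≠ s(u, v) := by
          intro h
          apply hc
          rcases Sym2.eq_iff.mp h with ⟨h1, h2⟩ | ⟨h1, h2⟩
          · rw [show g • u = u from (inv_smul_eq_iff.mp h1).symm,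
              show g • v = v from (inv_smul_eq_iff.mp h2).symm]
          · rw [show g • u = v from (inv_smul_eq_iff.mp h2).symm,
              show g • v = u from (inv_smul_eq_iff.mp h1).symm]
            exact Sym2.eq_swap
        have hgiu : g⁻¹ • u ∉ E ∧ g⁻¹ • v ∉ E := by
          have hadj : T.Adj (g⁻¹ • u) (g⁻¹ • v) := (hact g⁻¹ u v).mp huv
          have := hsame _ _ hadj hci
          rcases hgiY with h | h
          · exact ⟨h, fun h' => h (this.mpr h')⟩
          · exact ⟨fun h' => h (this.mp h'), h⟩
        -- the edge ge is distinct from e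
        have hcnotmem : s(u, v) ∉ ({s(g • u, g • v)} : Set (Sym2 V)) := by
          simp only [Set.mem_singleton_iff]
          exact fun h => hc h.symm
        -- hence g • E is disjoint from E
        have disj : ∀ x ∈ E, g • x ∉ E := by
          intro x hx hgx
          have hr : (T.deleteEdges {s(g • u, g • v)}).Reachable (g • v) (g • x) := by
            have : (T.deleteEdges {s(u, v)}).Reachable v x := by rw [hE] at hx; exact hx
            exact smul_deleteEdges_reachable T hact g u v this
          obtain ⟨p⟩ := hr
          have hrv : (T.deleteEdges {s(g • u, g • v)}).Reachable (g • v) v :=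
            enter _ p hgu.2 hgx
          have := smul_deleteEdges_reachable T hact g⁻¹ (g • u) (g • v) hrv
          rw [inv_smul_smul, inv_smul_smul] at this
          apply hgiu.2
          rw [hE, Set.mem_setOf_eq]
          exact this
        -- contradiction with Y nonempty
        obtain ⟨k, hk⟩ := Ynonempty
        have hgk : g * k ∈ Y := by
          rw [← hYY]
          exact ⟨k, hk, rfl⟩
        rw [hY, Set.mem_setOf_eq] at hk hgk
        rw [mul_smul] at hgk
        exact disj _ hk.1 hgk.1
    · intro hEE
      ext k
      rw [Set.mem_smul_set_iff_inv_smul_mem, hY, Set.mem_setOf_eq, Set.mem_setOf_eq,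
        smul_eq_mul, mul_smul, mul_smul]
      have hmem : ∀ x : V, g⁻¹ • x ∈ E ↔ x ∈ E := by
        intro x
        rw [← Set.mem_smul_set_iff_inv_smul_mem, hEE]
      rw [hmem, hmem]
  refine ⟨main, ?_⟩
  rw [Set.smul_set_compl, Set.smul_set_compl, compl_inj_iff, compl_inj_iff]
  exact main
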